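/- Let Δ(x) = Σ_{j=1}^g λⱼ/(cⱼ − x) with λⱼ > 0, c₁,…,c_g distinct reals, let y ∈ ℝ be such that the preimage Δ⁻¹(y) = {x₁,…,x_g} consists of g distinct points distinct from all cⱼ, let σ'(xₖ) ≥ 0 be given weights, and define the g×g matrix Ξ'(y) = Σ_{k=1}^g (σ'(xₖ)/Δ'(xₖ)) · W(xₖ)* W(xₖ), where W(x) is the row vector (1/(c₁−x), …, 1/(c_g−x)). Then det Ξ'(y) = ∏_{k=1}^g σ'(xₖ) / ∏_{k=1}^g λₖ. -/

import Mathlib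

/-- Lemma 5.4: with `Δ(t) = Σⱼ λⱼ/(cⱼ−t)`, `λⱼ > 0`, distinct poles `cⱼ`, and
`Δ⁻¹(y) = {x₁,…,x_g}` consisting of `g` distinct preimage points (distinct from the `cⱼ`),
for nonnegative weights `σ'(xₖ)` the matrix
`Ξ'(y) = Σₖ (σ'(xₖ)/Δ'(xₖ)) W(xₖ)*W(xₖ)` with `W(x) = (1/(cⱼ−x))ⱼ` satisfies
`det Ξ'(y) = ∏ₖ σ'(xₖ) / ∏ₖ λₖ`. -/
theorem density_determinant (g : ℕ) (x c lam σ' : Fin g → ℝ) (y : ℝ)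
    (hlam : ∀ j, 0 < lam j) (hσ : ∀ k, 0 ≤ σ' k)
    (hx : Function.Injective x) (hc : Function.Injective c)
    (hxc : ∀ k j, x k ≠ c j)
    (hpre : ∀ t : ℝ, (∀ j, t ≠ c j) →
      ((∑ j : Fin g, lam j / (c j - t)) = y ↔ ∃ k, t = x k)) :
    (∑ k : Fin g, (σ' k / ∑ j : Fin g, lam j / (c j - x k)^2) •
        Matrix.vecMulVec (fun j : Fin g => 1 / (c j - x k))
          (fun j : Fin g => 1 / (c j - x k))).det
      = (∏ k : Fin g, σ' k) / (∏ k : Fin g, lam k) := by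
  classical
  set D : Fin g → ℝ := fun k => ∑ j : Fin g, lam j / (c j - x k)^2 with hD
  set A : Matrix (Fin g) (Fin g) ℝ := Matrix.of (fun k j => 1 / (c j - x k)) with hA
  have hden : ∀ k j, c j - x k ≠ 0 := fun k j h => hxc k j (by linarith)
  have hDpos : ∀ k, 0 < D k := by
    intro k
    apply Finset.sum_pos
    · intro j _
      have := hden k j
      exact div_pos (hlam j) (by positivity)
    · exact ⟨k, Finset.mem_univ k⟩
  have h1 : (∑ k : Fin g, (σ' k / D k) •
        Matrix.vecMulVec (fun j : Fin g => 1 / (c j - x k))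
          (fun j : Fin g => 1 / (c j - x k)))
      = A.transpose * Matrix.diagonal (fun k => σ' k / D k) * A := by
    ext j j'
    simp only [Matrix.mul_apply, Matrix.diagonal_apply, Matrix.transpose_apply, hA,
      Matrix.of_apply, Matrix.sum_apply, Matrix.smul_apply, Matrix.vecMulVec_apply,
      mul_ite, mul_zero, ite_mul, zero_mul, Finset.sum_ite_eq, Finset.sum_ite_eq',
      Finset.mem_univ, if_true, smul_eq_mul]
    exact Finset.sum_congr rfl fun k _ => by ring
  have hval : ∀ k, (∑ j : Fin g, lam j / (c j - x k)) = y := fun k =>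
    (hpre (x k) (fun j => hxc k j)).mpr ⟨k, rfl⟩
  have h2 : A * Matrix.diagonal lam * A.transpose = Matrix.diagonal D := by
    ext k l
    simp only [Matrix.mul_apply, Matrix.diagonal_apply, Matrix.transpose_apply, hA,
      Matrix.of_apply, mul_ite, mul_zero, ite_mul, zero_mul, Finset.sum_ite_eq,
      Finset.sum_ite_eq', Finset.mem_univ, if_true]
    by_cases hkl : k = l
    · subst hkl
      rw [if_pos rfl, hD]
      refine Finset.sum_congr rfl fun j _ => ?_
      have h := hden k j
      field_simp
    · rw [if_neg hkl]
      have hxkl : x k - x l ≠ 0 := sub_ne_zero.mpr (fun h => hkl (hx h))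
      have key : ∀ j ∈ Finset.univ, 1 / (c j - x k) * lam j * (1 / (c j - x l))
          = (lam j / (c j - x k) - lam j / (c j - x l)) / (x k - x l) := by
        intro j _
        have h1 := hden k j
        have h2 := hden l j
        field_simp
        ring
      rw [Finset.sum_congr rfl key, ← Finset.sum_div,
        Finset.sum_sub_distrib, hval, hval, sub_self, zero_div]
  have hdet2 : A.det ^ 2 * ∏ k, lam k = ∏ k, D k := by
    have := congrArg Matrix.det h2
    simpa [Matrix.det_mul, Matrix.det_transpose, Matrix.det_diagonal, sq, mul_comm,
      mul_assoc, mul_left_comm] using this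
  have hDprod : (∏ k, D k) ≠ 0 := Finset.prod_ne_zero_iff.mpr fun k _ => (hDpos k).ne'
  have hlprod : (∏ k, lam k) ≠ 0 := Finset.prod_ne_zero_iff.mpr fun k _ => (hlam k).ne'
  rw [h1, Matrix.det_mul, Matrix.det_mul, Matrix.det_transpose, Matrix.det_diagonal,
    Finset.prod_div_distrib]
  field_simp
  linear_combination (∏ k, σ' k) * hdet2
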